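/- Let N ≥ 1 and m : ZMod N → ℝ, and let m̄ = (1/N) ∑_{i ∈ ZMod N} m(i) be the mean. Then ∑_{i ∈ ZMod N} (m(i) − m̄)² ≤ N² · ∑_{i ∈ ZMod N} (m(i) − m(i−1))². -/

import Mathlib

private lemma telescope_cycle {N : ℕ} [NeZero N] (m : ZMod N → ℝ) (j : ZMod N) (r : ℕ) :
    m (j + r) - m j = ∑ t ∈ Finset.range r, (m (j + t + 1) - m (j + t)) := by
  induction r with
  | zero => simp
  | succ r ih =>
    rw [Finset.sum_range_succ, ← ih]
    push_cast
    ring_nf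

private lemma diff_le_S {N : ℕ} [NeZero N] (m : ZMod N → ℝ) (i j : ZMod N) :
    |m i - m j| ≤ ∑ k : ZMod N, |m k - m (k - 1)| := by
  set r := (i - j).val with hr
  have hij : j + (r : ZMod N) = i := by
    rw [hr, ZMod.natCast_rightInverse (i - j)]; ring
  have htel := telescope_cycle m j r
  rw [hij] at htel
  rw [htel]
  calc |∑ t ∈ Finset.range r, (m (j + t + 1) - m (j + t))|
      ≤ ∑ t ∈ Finset.range r, |m (j + t + 1) - m (j + t)| := Finset.abs_sum_le_sum_abs _ _
    _ = ∑ t ∈ Finset.range r, |m ((j + t + 1 : ZMod N)) - m ((j + t + 1) - 1)| := by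
        apply Finset.sum_congr rfl; intro t _; ring_nf
    _ = ∑ k ∈ (Finset.range r).image (fun t : ℕ => (j + t + 1 : ZMod N)),
          |m k - m (k - 1)| := by
        rw [Finset.sum_image]
        intro t1 ht1 t2 ht2 h
        have hrN : r < N := (i - j).val_lt
        simp only [Finset.mem_coe, Finset.mem_range] at ht1 ht2
        have h2 : ((t1 : ZMod N)) = (t2 : ZMod N) := by
          have := h
          simpa using congrArg (fun x => x - j - 1) this
        have hv := congrArg ZMod.val h2
        rw [ZMod.val_natCast_of_lt (by omega), ZMod.val_natCast_of_lt (by omega)] at hv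
        exact hv
    _ ≤ ∑ k : ZMod N, |m k - m (k - 1)| := by
        apply Finset.sum_le_sum_of_subset_of_nonneg (Finset.subset_univ _)
        intro k _ _; exact abs_nonneg _

/-- Discrete Poincaré-type inequality on the cycle: the variance around the mean is
bounded by `N²` times the sum of squared consecutive differences. -/
theorem discrete_poincare_cycle (N : ℕ) (hN : 1 ≤ N) (m : ZMod N → ℝ) :
    haveI : NeZero N := ⟨by omega⟩
    ∑ i : ZMod N, (m i - (1 / N) * ∑ j : ZMod N, m j) ^ 2
      ≤ (N : ℝ) ^ 2 * ∑ i : ZMod N, (m i - m (i - 1)) ^ 2 := by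
  haveI : NeZero N := ⟨by omega⟩
  set S := ∑ k : ZMod N, |m k - m (k - 1)| with hS
  set D := ∑ i : ZMod N, (m i - m (i - 1)) ^ 2 with hD
  have hNpos : (0:ℝ) < N := by positivity
  have hcard : (Finset.univ : Finset (ZMod N)).card = N := by
    simp [ZMod.card N]
  have hSD : S ^ 2 ≤ N * D := by
    calc S ^ 2 ≤ (Finset.univ : Finset (ZMod N)).card *
          ∑ k : ZMod N, |m k - m (k - 1)| ^ 2 := sq_sum_le_card_mul_sum_sq
      _ = N * D := by rw [hcard]; congr 1; exact Finset.sum_congr rfl fun k _ => sq_abs _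
  have hpoint : ∀ i : ZMod N, (m i - (1 / N) * ∑ j : ZMod N, m j) ^ 2 ≤ S ^ 2 := by
    intro i
    have habs : |m i - (1 / N) * ∑ j : ZMod N, m j| ≤ S := by
      have h1 : m i - (1 / N) * ∑ j : ZMod N, m j
          = (1 / N) * ∑ j : ZMod N, (m i - m j) := by
        rw [Finset.sum_sub_distrib, Finset.sum_const, hcard]
        field_simp
        ring
      rw [h1, abs_mul, abs_of_nonneg (by positivity : (0:ℝ) ≤ 1 / N)]
      calc (1 / N) * |∑ j : ZMod N, (m i - m j)|
          ≤ (1 / N) * ∑ j : ZMod N, |m i - m j| := by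
            gcongr
            exact Finset.abs_sum_le_sum_abs _ _
        _ ≤ (1 / N) * ∑ _j : ZMod N, S := by
            gcongr with j
            exact diff_le_S m i j
        _ = S := by rw [Finset.sum_const, hcard]; field_simp; exact nsmul_eq_mul _ _
    calc (m i - (1 / N) * ∑ j : ZMod N, m j) ^ 2
        = |m i - (1 / N) * ∑ j : ZMod N, m j| ^ 2 := (sq_abs _).symm
      _ ≤ S ^ 2 := by gcongr
  calc ∑ i : ZMod N, (m i - (1 / N) * ∑ j : ZMod N, m j) ^ 2
      ≤ ∑ _i : ZMod N, S ^ 2 := Finset.sum_le_sum fun i _ => hpoint i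
    _ = N * S ^ 2 := by rw [Finset.sum_const, hcard]; simp
    _ ≤ N * (N * D) := by gcongr
    _ = (N : ℝ) ^ 2 * D := by ring
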